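/- Let b : ℝ^d × ℝ^d × P₂(ℝ^{2d}) → ℝ^d satisfy: (i) |b(z,γ) − b(z̄,γ̃)| ≤ K_b |z − z̄| + K_I W₂(γ, γ̃) for all z = (x,y), z̄ = (x̄,ȳ) ∈ ℝ^{2d} and γ, γ̃ ∈ P₂(ℝ^{2d}), with constants K_b, K_I > 0; and (ii) there exist θ, r, R > 0 and r₀ ∈ (−1,1) such that for all x, y, x̄, ȳ ∈ ℝ^d with |x−x̄|² + |y−ȳ|² ≥ R² and all μ ∈ P₂(ℝ^{2d}): ⟨r²(x−x̄) + r r₀ (y−ȳ), y−ȳ⟩ + ⟨(y−ȳ) + r r₀ (x−x̄), b(x,y,μ) − b(x̄,ȳ,μ)⟩ ≤ −θ (|x−x̄|² + |y−ȳ|²). Then there exists a constant C₀ > 0, depending only on r, r₀, K_b and θ, such that for every N ≥ 1 and all 𝐱 = (x^i), 𝐲 = (y^i), 𝐱̄ = (x̄^i), 𝐲̄ = (ȳ^i) ∈ (ℝ^d)^N, writing b^N(𝐱,𝐲)_i = b( x^i, y^i, (1/N) Σ_j δ_{(x^j,y^j)} ): ⟨r²(𝐱−𝐱̄) + r r₀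 (𝐲−𝐲̄), 𝐲−𝐲̄⟩ + ⟨(𝐲−𝐲̄) + r r₀(𝐱−𝐱̄), b^N(𝐱,𝐲) − b^N(𝐱̄,𝐲̄)⟩ ≤ (−θ + K_I(1+|r r₀|)) Σ_{i=1}^N (|x^i−x̄^i|² + |y^i−ȳ^i|²) + (C₀ + θ) Σ_{i=1}^N (|x^i−x̄^i|² + |y^i−ȳ^i|²) · 1[ |x^i−x̄^i|² + |y^i−ȳ^i|² < R² ]. -/

import Mathlib

open MeasureTheory ProbabilityTheory
open scoped ENNReal NNReal RealInnerProductSpace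

/-- `π` is a coupling of `μ` and `ν`. -/
def IsCoupling {α β : Type*} [MeasurableSpace α] [MeasurableSpace β]
    (π : Measure (α × β)) (μ : Measure α) (ν : Measure β) : Prop :=
  π.map Prod.fst = μ ∧ π.map Prod.snd = ν

/-- The squared `L²`-Wasserstein distance, as an extended nonnegative real. -/
noncomputable def W2sq {E : Type*} [MeasurableSpace E] [NormedAddCommGroup E]
    (μ ν : Measure E) : ℝ≥0∞ :=
  ⨅ (π : Measure (E × E)) (_ : IsCoupling π μ ν), ∫⁻ p, (‖p.1 - p.2‖₊ : ℝ≥0∞) ^ 2 ∂π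

/-- The `L²`-Wasserstein distance, as a real number. -/
noncomputable def W2r {E : Type*} [MeasurableSpace E] [NormedAddCommGroup E]
    (μ ν : Measure E) : ℝ := Real.sqrt (W2sq μ ν).toReal

/-- A probability measure with finite second moment (an element of `P₂`). -/
def MemP2 {E : Type*} [MeasurableSpace E] [NormedAddCommGroup E] (μ : Measure E) : Prop :=
  IsProbabilityMeasure μ ∧ ∫⁻ x, (‖x‖₊ : ℝ≥0∞) ^ 2 ∂μ < ∞

/-- The empirical measure `(1/N) ∑ᵢ δ_{z i}` of the points `z 1, …, z N`. -/
noncomputable def empMeas {E : Type*} [MeasurableSpace E] {N : ℕ} (z : Fin N → E) :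
    Measure E := (N : ℝ≥0∞)⁻¹ • ∑ i, Measure.dirac (z i)

/-- The identification `ℝ^d × ℝ^d ≅ ℝ^{2d}` (with the Euclidean norm
`‖(x,y)‖² = ‖x‖² + ‖y‖²`). -/
noncomputable def pairE {d : ℕ} (x y : EuclideanSpace ℝ (Fin d)) :
    EuclideanSpace ℝ (Fin d ⊕ Fin d) :=
  WithLp.toLp 2 (fun i => Sum.elim (fun j => x j) (fun j => y j) i)

set_option linter.unusedSectionVars false

section helpers
variable {E : Type*} [MeasurableSpace E] [NormedAddCommGroup E] [BorelSpace E]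
  [SecondCountableTopology E]

lemma W2r_self (μ : Measure E) [IsProbabilityMeasure μ] : W2r μ μ = 0 := by
  have h : W2sq μ μ = 0 := by
    refine le_antisymm ?_ zero_le
    have hdiag : Measurable fun z : E => (z, z) := measurable_id.prodMk measurable_id
    have hcoup : IsCoupling (μ.map fun z => (z, z)) μ μ := by
      constructor
      · rw [Measure.map_map measurable_fst hdiag,
          show (Prod.fst ∘ fun z : E => (z, z)) = id from rfl, Measure.map_id]
      · rw [Measure.map_map measurable_snd hdiag,
          show (Prod.snd ∘ fun z : E => (z, z)) = id from rfl, Measure.map_id]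
    have h1 : W2sq μ μ ≤ ∫⁻ p, (‖p.1 - p.2‖₊ : ℝ≥0∞) ^ 2 ∂(μ.map fun z => (z, z)) := by
      unfold W2sq; exact iInf₂_le (μ.map fun z => (z, z)) hcoup
    refine le_trans h1 ?_
    rw [lintegral_map (by fun_prop : Measurable fun p : E × E => (‖p.1 - p.2‖₊ : ℝ≥0∞) ^ 2) hdiag]
    simp
  simp [W2r, h]

lemma empCoupling_isCoupling {N : ℕ} (z w : Fin N → E) :
    IsCoupling ((N : ℝ≥0∞)⁻¹ • ∑ i, Measure.dirac (z i, w i)) (empMeas z) (empMeas w) := by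
  constructor
  · ext s hs
    rw [Measure.map_apply measurable_fst hs]
    simp only [empMeas, Measure.smul_apply, Measure.coe_finset_sum, Finset.sum_apply,
      Measure.dirac_apply' _ hs, Measure.dirac_apply' _ (measurable_fst hs), smul_eq_mul]
    congr 1
  · ext s hs
    rw [Measure.map_apply measurable_snd hs]
    simp only [empMeas, Measure.smul_apply, Measure.coe_finset_sum, Finset.sum_apply,
      Measure.dirac_apply' _ hs, Measure.dirac_apply' _ (measurable_snd hs), smul_eq_mul]
    congr 1

lemma memP2_empMeas {N : ℕ} (hN : N ≠ 0) (z : Fin N → E) : MemP2 (empMeas z) := by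
  have hNe : (N : ℝ≥0∞) ≠ 0 := by exact_mod_cast hN
  constructor
  · constructor
    simp [empMeas, ENNReal.inv_mul_cancel hNe (ENNReal.natCast_ne_top N)]
  · rw [empMeas, lintegral_smul_measure, lintegral_finset_sum_measure]
    have : ∀ i : Fin N, ∫⁻ x, (‖x‖₊ : ℝ≥0∞) ^ 2 ∂(Measure.dirac (z i)) = (‖z i‖₊ : ℝ≥0∞) ^ 2 := by
      intro i
      exact lintegral_dirac' _ (measurable_nnnorm.coe_nnreal_ennreal.pow_const 2)
    simp only [this]
    exact ENNReal.mul_lt_top (ENNReal.inv_lt_top.2 (by exact_mod_cast Nat.pos_of_ne_zero hN))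
      (ENNReal.sum_lt_top.2 fun i _ => ENNReal.pow_lt_top ENNReal.coe_lt_top)

lemma W2sq_emp_le {N : ℕ} (z w : Fin N → E) :
    W2sq (empMeas z) (empMeas w) ≤ (N : ℝ≥0∞)⁻¹ * ∑ i, (‖z i - w i‖₊ : ℝ≥0∞) ^ 2 := by
  have h1 : W2sq (empMeas z) (empMeas w)
      ≤ ∫⁻ p, (‖p.1 - p.2‖₊ : ℝ≥0∞) ^ 2 ∂((N : ℝ≥0∞)⁻¹ • ∑ i, Measure.dirac (z i, w i)) :=
 by unfold W2sq
    exact iInf₂_le ((N : ℝ≥0∞)⁻¹ • ∑ i, Measure.dirac (z i, w i)) (empCoupling_isCoupling z w)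
  refine le_trans h1 ?_
  rw [lintegral_smul_measure, lintegral_finset_sum_measure]
  have : ∀ i : Fin N, ∫⁻ p, (‖p.1 - p.2‖₊ : ℝ≥0∞) ^ 2 ∂(Measure.dirac (z i, w i))
      = (‖z i - w i‖₊ : ℝ≥0∞) ^ 2 := fun i =>
    lintegral_dirac' _ (((measurable_fst.sub measurable_snd).nnnorm.coe_nnreal_ennreal).pow_const 2)
  simp only [this]
  exact le_rfl

lemma W2r_emp_le {N : ℕ} (hN : N ≠ 0) (z w : Fin N → E) :
    W2r (empMeas z) (empMeas w) ≤ Real.sqrt ((∑ i, ‖z i - w i‖ ^ 2) / N) := by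
  refine Real.sqrt_le_sqrt ?_
  have h := W2sq_emp_le z w
  have hfin : (N : ℝ≥0∞)⁻¹ * ∑ i, (‖z i - w i‖₊ : ℝ≥0∞) ^ 2 ≠ ∞ :=
    ENNReal.mul_ne_top (by simp [hN]) (ENNReal.sum_lt_top.2 fun i _ => ENNReal.pow_lt_top ENNReal.coe_lt_top).ne
  have := ENNReal.toReal_mono hfin h
  refine le_trans this (le_of_eq ?_)
  rw [ENNReal.toReal_mul, ENNReal.toReal_inv, div_eq_inv_mul,
    ENNReal.toReal_sum (fun i _ => (ENNReal.pow_lt_top ENNReal.coe_lt_top).ne), ENNReal.toReal_natCast]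
  congr 1

end helpers

lemma pairE_sub {d : ℕ} (x y x' y' : EuclideanSpace ℝ (Fin d)) :
    pairE x y - pairE x' y' = pairE (x - x') (y - y') := by
  ext i
  cases i <;> simp [pairE]

lemma pairE_norm_sq {d : ℕ} (x y : EuclideanSpace ℝ (Fin d)) :
    ‖pairE x y‖ ^ 2 = ‖x‖ ^ 2 + ‖y‖ ^ 2 := by
  rw [EuclideanSpace.norm_eq, EuclideanSpace.norm_eq (x := x), EuclideanSpace.norm_eq (x := y),
    Real.sq_sqrt (by positivity), Real.sq_sqrt (by positivity), Real.sq_sqrt (by positivity),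
    Fintype.sum_sum_type]
  simp [pairE]


set_option maxHeartbeats 1000000 in
/-- (Partial dissipativity of the `N`-particle drift.)  If
`b : ℝ^d × ℝ^d × P₂(ℝ^{2d}) → ℝ^d` is Lipschitz in all variables and partially dissipative
outside radius `R` uniformly in the measure, then there is a constant `C₀ > 0`, depending only
on `r, r₀, K_b, θ`, such that the `N`-particle drift `b^N` satisfies the stated partial
dissipativity estimate for every `N ≥ 1`. -/
theorem statement_8 (K_b θ r r₀ : ℝ) (hKb : 0 < K_b) (hθ : 0 < θ) (hr : 0 < r)
    (hr₀ : -1 < r₀ ∧ r₀ < 1) :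
    ∃ C₀ : ℝ, 0 < C₀ ∧
      ∀ (d : ℕ) (K_I R : ℝ), 0 < K_I → 0 < R →
      ∀ b : EuclideanSpace ℝ (Fin d) → EuclideanSpace ℝ (Fin d) →
          Measure (EuclideanSpace ℝ (Fin d ⊕ Fin d)) → EuclideanSpace ℝ (Fin d),
      -- Lipschitz condition
      (∀ x y xbar ybar γ γtil, MemP2 γ → MemP2 γtil →
        ‖b x y γ - b xbar ybar γtil‖
          ≤ K_b * ‖pairE x y - pairE xbar ybar‖ + K_I * W2r γ γtil) →
      -- partial dissipativity, uniformly over measures in P₂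
      (∀ x y xbar ybar : EuclideanSpace ℝ (Fin d),
        R ^ 2 ≤ ‖x - xbar‖ ^ 2 + ‖y - ybar‖ ^ 2 →
        ∀ μ : Measure (EuclideanSpace ℝ (Fin d ⊕ Fin d)), MemP2 μ →
          ⟪(r ^ 2) • (x - xbar) + (r * r₀) • (y - ybar), y - ybar⟫
            + ⟪(y - ybar) + (r * r₀) • (x - xbar), b x y μ - b xbar ybar μ⟫
          ≤ -θ * (‖x - xbar‖ ^ 2 + ‖y - ybar‖ ^ 2)) →
      -- the N-particle estimate
      ∀ N : ℕ, 1 ≤ N → ∀ x y xbar ybar : Fin N → EuclideanSpace ℝ (Fin d),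
        (∑ i, ⟪(r ^ 2) • (x i - xbar i) + (r * r₀) • (y i - ybar i), y i - ybar i⟫)
          + ∑ i, ⟪(y i - ybar i) + (r * r₀) • (x i - xbar i),
              b (x i) (y i) (empMeas fun j => pairE (x j) (y j))
                - b (xbar i) (ybar i) (empMeas fun j => pairE (xbar j) (ybar j))⟫
        ≤ (-θ + K_I * (1 + |r * r₀|)) * ∑ i, (‖x i - xbar i‖ ^ 2 + ‖y i - ybar i‖ ^ 2)
          + (C₀ + θ) * ∑ i, (if ‖x i - xbar i‖ ^ 2 + ‖y i - ybar i‖ ^ 2 < R ^ 2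
              then ‖x i - xbar i‖ ^ 2 + ‖y i - ybar i‖ ^ 2 else 0) := by
  refine ⟨r ^ 2 + |r * r₀| + K_b * (1 + |r * r₀|), by positivity, ?_⟩
  intro d K_I R hKI hR b hLip hDiss N hN x y xbar ybar
  set C₀ : ℝ := r ^ 2 + |r * r₀| + K_b * (1 + |r * r₀|) with hC₀
  have hNz : N ≠ 0 := Nat.one_le_iff_ne_zero.1 hN
  have hNr : (N : ℝ) ≠ 0 := Nat.cast_ne_zero.2 hNz
  set μ := empMeas (fun j => pairE (x j) (y j)) with hμdef
  set ν := empMeas (fun j => pairE (xbar j) (ybar j)) with hνdef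
  have hμ : MemP2 μ := memP2_empMeas hNz _
  have hν : MemP2 ν := memP2_empMeas hNz _
  haveI : IsProbabilityMeasure μ := hμ.1
  have hWself : W2r μ μ = 0 := W2r_self μ
  set s : Fin N → ℝ := fun i => ‖x i - xbar i‖ ^ 2 + ‖y i - ybar i‖ ^ 2 with hsdef
  have hs0 : ∀ i, 0 ≤ s i := fun i => by positivity
  set S : ℝ := ∑ i, s i with hSdef
  have hS0 : 0 ≤ S := Finset.sum_nonneg fun i _ => hs0 i
  have hpairnorm : ∀ i, ‖pairE (x i) (y i) - pairE (xbar i) (ybar i)‖ = Real.sqrt (s i) := by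
    intro i
    rw [pairE_sub, ← Real.sqrt_sq (norm_nonneg _), pairE_norm_sq]
  have hW : W2r μ ν ≤ Real.sqrt (S / N) := by
    refine le_trans (W2r_emp_le hNz _ _) (le_of_eq ?_)
    congr 2
    refine Finset.sum_congr rfl fun i _ => ?_
    rw [pairE_sub, pairE_norm_sq]
  have hW0 : 0 ≤ W2r μ ν := Real.sqrt_nonneg _
  have hna : ∀ i, ‖x i - xbar i‖ ≤ Real.sqrt (s i) := by
    intro i
    rw [← Real.sqrt_sq (norm_nonneg (x i - xbar i))]
    refine Real.sqrt_le_sqrt ?_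
    have hsi : s i = ‖x i - xbar i‖ ^ 2 + ‖y i - ybar i‖ ^ 2 := rfl
    nlinarith [sq_nonneg ‖y i - ybar i‖]
  have hnb : ∀ i, ‖y i - ybar i‖ ≤ Real.sqrt (s i) := by
    intro i
    rw [← Real.sqrt_sq (norm_nonneg (y i - ybar i))]
    refine Real.sqrt_le_sqrt ?_
    have hsi : s i = ‖x i - xbar i‖ ^ 2 + ‖y i - ybar i‖ ^ 2 := rfl
    nlinarith [sq_nonneg ‖x i - xbar i‖]
  have hvec : ∀ i, ‖(y i - ybar i) + (r * r₀) • (x i - xbar i)‖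
      ≤ (1 + |r * r₀|) * Real.sqrt (s i) := by
    intro i
    calc ‖(y i - ybar i) + (r * r₀) • (x i - xbar i)‖
        ≤ ‖y i - ybar i‖ + |r * r₀| * ‖x i - xbar i‖ := by
          refine le_trans (norm_add_le _ _) ?_
          rw [norm_smul, Real.norm_eq_abs]
      _ ≤ Real.sqrt (s i) + |r * r₀| * Real.sqrt (s i) :=
          add_le_add (hnb i) (mul_le_mul_of_nonneg_left (hna i) (abs_nonneg _))
      _ = (1 + |r * r₀|) * Real.sqrt (s i) := by ring
  have key1 : ∀ i,
      ⟪(r ^ 2) • (x i - xbar i) + (r * r₀) • (y i - ybar i), y i - ybar i⟫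
        + ⟪(y i - ybar i) + (r * r₀) • (x i - xbar i),
            b (x i) (y i) μ - b (xbar i) (ybar i) μ⟫
      ≤ -θ * s i + (C₀ + θ) * (if s i < R ^ 2 then s i else 0) := by
    intro i
    by_cases hcase : s i < R ^ 2
    · rw [if_pos hcase]
      have h1 : ⟪(r ^ 2) • (x i - xbar i) + (r * r₀) • (y i - ybar i), y i - ybar i⟫
          ≤ (r ^ 2 + |r * r₀|) * s i := by
        have hi := real_inner_le_norm
          ((r ^ 2) • (x i - xbar i) + (r * r₀) • (y i - ybar i)) (y i - ybar i)
        have hn : ‖(r ^ 2) • (x i - xbar i) + (r * r₀) • (y i - ybar i)‖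
            ≤ r ^ 2 * ‖x i - xbar i‖ + |r * r₀| * ‖y i - ybar i‖ := by
          refine le_trans (norm_add_le _ _) ?_
          rw [norm_smul, norm_smul, Real.norm_eq_abs, Real.norm_eq_abs,
            abs_of_nonneg (sq_nonneg r)]
        have hsi : s i = ‖x i - xbar i‖ ^ 2 + ‖y i - ybar i‖ ^ 2 := rfl
        nlinarith [norm_nonneg (x i - xbar i), norm_nonneg (y i - ybar i),
          sq_nonneg (‖x i - xbar i‖ - ‖y i - ybar i‖), sq_nonneg r, abs_nonneg (r * r₀)]
      have hD : ‖b (x i) (y i) μ - b (xbar i) (ybar i) μ‖ ≤ K_b * Real.sqrt (s i) := by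
        have h := hLip (x i) (y i) (xbar i) (ybar i) μ μ hμ hμ
        rw [hWself, mul_zero, add_zero, hpairnorm i] at h
        exact h
      have h2 : ⟪(y i - ybar i) + (r * r₀) • (x i - xbar i),
          b (x i) (y i) μ - b (xbar i) (ybar i) μ⟫ ≤ K_b * (1 + |r * r₀|) * s i := by
        calc ⟪(y i - ybar i) + (r * r₀) • (x i - xbar i),
            b (x i) (y i) μ - b (xbar i) (ybar i) μ⟫
            ≤ ‖(y i - ybar i) + (r * r₀) • (x i - xbar i)‖
              * ‖b (x i) (y i) μ - b (xbar i) (ybar i) μ‖ := real_inner_le_norm _ _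
          _ ≤ ((1 + |r * r₀|) * Real.sqrt (s i)) * (K_b * Real.sqrt (s i)) :=
              mul_le_mul (hvec i) hD (norm_nonneg _) (by positivity)
          _ = K_b * (1 + |r * r₀|) * (Real.sqrt (s i) * Real.sqrt (s i)) := by ring
          _ = K_b * (1 + |r * r₀|) * s i := by rw [Real.mul_self_sqrt (hs0 i)]
      have hCs : (r ^ 2 + |r * r₀|) * s i + K_b * (1 + |r * r₀|) * s i
          = -θ * s i + (C₀ + θ) * s i := by rw [hC₀]; ring
      linarith
    · rw [if_neg hcase]
      push_neg at hcase
      have h := hDiss (x i) (y i) (xbar i) (ybar i) hcase μ hμ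
      have : -θ * (‖x i - xbar i‖ ^ 2 + ‖y i - ybar i‖ ^ 2) = -θ * s i := rfl
      linarith [h.trans_eq this]
  have key2 : ∑ i, ⟪(y i - ybar i) + (r * r₀) • (x i - xbar i),
      b (xbar i) (ybar i) μ - b (xbar i) (ybar i) ν⟫ ≤ K_I * (1 + |r * r₀|) * S := by
    have hterm : ∀ i, ⟪(y i - ybar i) + (r * r₀) • (x i - xbar i),
        b (xbar i) (ybar i) μ - b (xbar i) (ybar i) ν⟫
        ≤ (1 + |r * r₀|) * K_I * ((s i + S / N) / 2) := by
      intro i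
      have hE : ‖b (xbar i) (ybar i) μ - b (xbar i) (ybar i) ν‖ ≤ K_I * W2r μ ν := by
        have h := hLip (xbar i) (ybar i) (xbar i) (ybar i) μ ν hμ hν
        simpa using h
      have h1 := real_inner_le_norm ((y i - ybar i) + (r * r₀) • (x i - xbar i))
        (b (xbar i) (ybar i) μ - b (xbar i) (ybar i) ν)
      have h2 : ‖(y i - ybar i) + (r * r₀) • (x i - xbar i)‖
          * ‖b (xbar i) (ybar i) μ - b (xbar i) (ybar i) ν‖
          ≤ ((1 + |r * r₀|) * Real.sqrt (s i)) * (K_I * Real.sqrt (S / N)) := by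
        refine mul_le_mul (hvec i) (le_trans hE ?_) (norm_nonneg _) (by positivity)
        exact mul_le_mul_of_nonneg_left hW hKI.le
      have h3 : Real.sqrt (s i) * Real.sqrt (S / N) ≤ (s i + S / N) / 2 := by
        have ht := two_mul_le_add_sq (Real.sqrt (s i)) (Real.sqrt (S / N))
        rw [Real.sq_sqrt (hs0 i),
          Real.sq_sqrt (div_nonneg hS0 (Nat.cast_nonneg N))] at ht
        linarith
      have h4 : ((1 + |r * r₀|) * Real.sqrt (s i)) * (K_I * Real.sqrt (S / N))
          ≤ (1 + |r * r₀|) * K_I * ((s i + S / N) / 2) := by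
        have hc : 0 ≤ (1 + |r * r₀|) * K_I := by positivity
        calc ((1 + |r * r₀|) * Real.sqrt (s i)) * (K_I * Real.sqrt (S / N))
            = (1 + |r * r₀|) * K_I * (Real.sqrt (s i) * Real.sqrt (S / N)) := by ring
          _ ≤ (1 + |r * r₀|) * K_I * ((s i + S / N) / 2) :=
              mul_le_mul_of_nonneg_left h3 hc
      linarith
    have hsum : ∑ i, ((s i + S / N) / 2) = S := by
      rw [← Finset.sum_div, Finset.sum_add_distrib, Finset.sum_const, Finset.card_univ,
        Fintype.card_fin, nsmul_eq_mul]
      have h2 : (N : ℝ) * (S / N) = S := by field_simp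
      rw [h2, ← hSdef]
      ring
    calc ∑ i, ⟪(y i - ybar i) + (r * r₀) • (x i - xbar i),
        b (xbar i) (ybar i) μ - b (xbar i) (ybar i) ν⟫
        ≤ ∑ i, (1 + |r * r₀|) * K_I * ((s i + S / N) / 2) :=
          Finset.sum_le_sum fun i _ => hterm i
      _ = (1 + |r * r₀|) * K_I * S := by rw [← Finset.mul_sum, hsum]
      _ = K_I * (1 + |r * r₀|) * S := by ring
  have hsplit : ∀ i, ⟪(y i - ybar i) + (r * r₀) • (x i - xbar i),
      b (x i) (y i) μ - b (xbar i) (ybar i) ν⟫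
      = ⟪(y i - ybar i) + (r * r₀) • (x i - xbar i),
          b (x i) (y i) μ - b (xbar i) (ybar i) μ⟫
        + ⟪(y i - ybar i) + (r * r₀) • (x i - xbar i),
            b (xbar i) (ybar i) μ - b (xbar i) (ybar i) ν⟫ := by
    intro i
    rw [← inner_add_right, sub_add_sub_cancel]
  calc (∑ i, ⟪(r ^ 2) • (x i - xbar i) + (r * r₀) • (y i - ybar i), y i - ybar i⟫)
        + ∑ i, ⟪(y i - ybar i) + (r * r₀) • (x i - xbar i),
            b (x i) (y i) μ - b (xbar i) (ybar i) ν⟫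
      = (∑ i, (⟪(r ^ 2) • (x i - xbar i) + (r * r₀) • (y i - ybar i), y i - ybar i⟫
          + ⟪(y i - ybar i) + (r * r₀) • (x i - xbar i),
              b (x i) (y i) μ - b (xbar i) (ybar i) μ⟫))
        + ∑ i, ⟪(y i - ybar i) + (r * r₀) • (x i - xbar i),
            b (xbar i) (ybar i) μ - b (xbar i) (ybar i) ν⟫ := by
        simp only [hsplit, Finset.sum_add_distrib]
        ring
    _ ≤ (∑ i, (-θ * s i + (C₀ + θ) * (if s i < R ^ 2 then s i else 0)))
        + K_I * (1 + |r * r₀|) * S :=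
        add_le_add (Finset.sum_le_sum fun i _ => key1 i) key2
    _ = (-θ + K_I * (1 + |r * r₀|)) * S
        + (C₀ + θ) * ∑ i, (if s i < R ^ 2 then s i else 0) := by
        rw [Finset.sum_add_distrib, ← Finset.mul_sum, ← Finset.mul_sum, ← hSdef]
        ring
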